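/- Every nonzero ideal of Z[i] coprime to 2 has a unique generator congruent to 1 modulo (1+i)^3 (a primary generator). -/
import Mathlib

/-- A Gaussian integer is *primary* if it is congruent to `1` modulo `(1+i)^3`. -/
def GaussianInt.IsPrimary (c : GaussianInt) : Prop :=
  ((1 + (⟨0, 1⟩ : GaussianInt)) ^ 3) ∣ (c - 1)

lemma gi_units {u : GaussianInt} (hu : IsUnit u) :
    u = 1 ∨ u = -1 ∨ u = ⟨0,1⟩ ∨ u = ⟨0,-1⟩ := by
  have hn : u.norm = 1 := (Zsqrtd.norm_eq_one_iff' (by norm_num) u).mpr hu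
  obtain ⟨a, b⟩ := u
  rw [Zsqrtd.norm_def] at hn
  simp only at hn
  have h1 : -1 ≤ a ∧ a ≤ 1 := ⟨by nlinarith [mul_self_nonneg a, mul_self_nonneg b], by nlinarith [mul_self_nonneg a, mul_self_nonneg b]⟩
  have h2 : -1 ≤ b ∧ b ≤ 1 := ⟨by nlinarith [mul_self_nonneg a, mul_self_nonneg b], by nlinarith [mul_self_nonneg a, mul_self_nonneg b]⟩
  obtain ⟨h1a, h1b⟩ := h1; obtain ⟨h2a, h2b⟩ := h2
  interval_cases a <;> interval_cases b <;> revert hn <;> decide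

lemma primary_iff (c : GaussianInt) :
    c.IsPrimary ↔ (4 ∣ c.re + c.im - 1 ∧ 4 ∣ c.re - c.im - 1) := by
  have hm : ((1 + (⟨0, 1⟩ : GaussianInt)) ^ 3) = ⟨-2, 2⟩ := by decide
  rw [GaussianInt.IsPrimary, hm]
  constructor
  · rintro ⟨w, hw⟩
    rw [Zsqrtd.ext_iff] at hw
    simp [Zsqrtd.re_mul, Zsqrtd.im_mul] at hw
    exact ⟨⟨-w.im, by omega⟩, ⟨-w.re, by omega⟩⟩
  · rintro ⟨⟨x, hx⟩, ⟨y, hy⟩⟩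
    refine ⟨⟨-y, -x⟩, ?_⟩
    rw [Zsqrtd.ext_iff]
    simp [Zsqrtd.re_mul, Zsqrtd.im_mul]
    omega

lemma assoc_unit_mul {u g : GaussianInt} (hu : IsUnit u) : Associated (u * g) g :=
  (Associated.symm ⟨hu.unit, by rw [IsUnit.unit_spec]; ring⟩)

lemma gi_isUnit_i : IsUnit (⟨0,1⟩ : GaussianInt) :=
  (Zsqrtd.norm_eq_one_iff' (by norm_num) _).mp (by decide)

lemma gi_isUnit_negi : IsUnit (⟨0,-1⟩ : GaussianInt) :=
  (Zsqrtd.norm_eq_one_iff' (by norm_num) _).mp (by decide)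

/-- Every nonzero ideal of `ℤ[i]` coprime to `2` has a unique primary generator. -/
theorem exists_unique_primary_generator
    (I : Ideal GaussianInt) (hI : I ≠ ⊥)
    (hcop : IsCoprime I (Ideal.span {(2 : GaussianInt)})) :
    ∃! c : GaussianInt, Ideal.span {c} = I ∧ GaussianInt.IsPrimary c := by
  obtain ⟨g, hg⟩ := (IsPrincipalIdealRing.principal I).principal
  rw [hg] at hcop
  have hcop' : IsCoprime g 2 := (Ideal.isCoprime_span_singleton_iff g 2).mp hcop
  -- g has odd "re+im"
  have hodd : ¬ (2 ∣ g.re + g.im) := by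
    rintro ⟨k, hk⟩
    have hdvd : (⟨1,1⟩ : GaussianInt) ∣ g := by
      refine ⟨⟨k, g.im - k⟩, ?_⟩
      rw [Zsqrtd.ext_iff]
      simp [Zsqrtd.re_mul, Zsqrtd.im_mul]
      omega
    have hdvd2 : (⟨1,1⟩ : GaussianInt) ∣ 2 := ⟨⟨1,-1⟩, by decide⟩
    have hu := hcop'.isUnit_of_dvd' hdvd hdvd2
    rcases gi_units hu with h | h | h | h <;> exact absurd h (by decide)
  have hs4 : (g.re + g.im) % 4 = 1 ∨ (g.re + g.im) % 4 = 3 := by omega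
  have hd4 : (g.re - g.im) % 4 = 1 ∨ (g.re - g.im) % 4 = 3 := by omega
  obtain ⟨c, hassoc, hcprim⟩ : ∃ c : GaussianInt, Associated c g ∧ c.IsPrimary := by
    rcases hs4 with hs | hs <;> rcases hd4 with hd | hd
    · exact ⟨g, Associated.refl g, (primary_iff g).mpr (by omega)⟩
    · refine ⟨⟨0,-1⟩ * g, assoc_unit_mul gi_isUnit_negi, (primary_iff _).mpr ?_⟩
      simp [Zsqrtd.re_mul, Zsqrtd.im_mul]
      omega
    · refine ⟨⟨0,1⟩ * g, assoc_unit_mul gi_isUnit_i, (primary_iff _).mpr ?_⟩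
      simp [Zsqrtd.re_mul, Zsqrtd.im_mul]
      omega
    · refine ⟨⟨-1,0⟩ * g, assoc_unit_mul (by exact (Zsqrtd.norm_eq_one_iff' (by norm_num) _).mp (by decide)), (primary_iff _).mpr ?_⟩
      simp [Zsqrtd.re_mul, Zsqrtd.im_mul]
      omega
  have hspan : Ideal.span {c} = I := by
    rw [hg]; exact Ideal.span_singleton_eq_span_singleton.mpr hassoc
  refine ⟨c, ⟨hspan, hcprim⟩, ?_⟩
  rintro c' ⟨hspan', hprim'⟩
  have hcc : Associated c' c := by
    rw [← Ideal.span_singleton_eq_span_singleton, hspan, hspan']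
  obtain ⟨v, hv⟩ := hcc
  obtain ⟨hp1, hp2⟩ := (primary_iff c).mp hcprim
  obtain ⟨hp1', hp2'⟩ := (primary_iff c').mp hprim'
  rcases gi_units v.isUnit with h | h | h | h <;> rw [h] at hv
  · rw [mul_one] at hv; exact hv
  all_goals {
    rw [Zsqrtd.ext_iff] at hv
    simp [Zsqrtd.re_mul, Zsqrtd.im_mul] at hv
    rw [Zsqrtd.ext_iff]
    omega }
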